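/- Let φ be an increasing concave function on (0,∞) with φ(0+) = 0. The Lorentz space Λ_φ contains a lattice isometric copy of ℓ∞ if and only if φ(∞) := lim_{t→∞} φ(t) < ∞. -/

import Mathlib

open Filter Topology MeasureTheory Set

/-- A **Banach ideal space** on a measure space `(α, μ)`: a collection of (real-valued)
measurable functions with a complete lattice-compatible norm satisfying the ideal property. -/
structure BanachIdealSpace (α : Type*) [MeasurableSpace α] (μ : Measure α) where
  Mem : (α → ℝ) → Prop
  N : (α → ℝ) → ℝ
  mem_zero : Mem 0
  mem_add : ∀ f g, Mem f → Mem g → Mem (f + g)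
  mem_smul : ∀ (c : ℝ) f, Mem f → Mem (c • f)
  measurable : ∀ f, Mem f → AEMeasurable f μ
  N_nonneg : ∀ f, 0 ≤ N f
  N_zero : N 0 = 0
  N_eq_zero : ∀ f, Mem f → N f = 0 → (∀ᵐ x ∂μ, f x = 0)
  N_add : ∀ f g, Mem f → Mem g → N (f + g) ≤ N f + N g
  N_smul : ∀ (c : ℝ) f, N (c • f) = |c| * N f
  ideal : ∀ f g, AEMeasurable f μ → (∀ᵐ x ∂μ, |f x| ≤ |g x|) → Mem g →
    Mem f ∧ N f ≤ N g
  complete : ∀ u : ℕ → (α → ℝ), (∀ n, Mem (u n)) →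
    (∀ ε : ℝ, 0 < ε → ∃ n₀ : ℕ, ∀ m n, n₀ ≤ m → n₀ ≤ n → N (u m - u n) < ε) →
    ∃ f, Mem f ∧ Tendsto (fun n => N (u n - f)) atTop (𝓝 0)

namespace BanachIdealSpace

variable {α : Type*} [MeasurableSpace α] {μ : Measure α}

/-- Distance (w.r.t. a norm functional `N`) from `f` to a set `S` of functions. -/
noncomputable def distIn (N : (α → ℝ) → ℝ) (f : α → ℝ) (S : Set (α → ℝ)) : ℝ :=
  sInf ((fun g => N (f - g)) '' S)

/-- The set of **order continuous elements** of a (generalized) function space given by a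
membership predicate `Mem` and a norm `N`: those `f` such that every sequence `uₙ` with
`0 ≤ uₙ ≤ |f|` a.e., a.e. non-increasing and converging to `0` a.e., satisfies `N (uₙ) → 0`. -/
def ocSet (μ : Measure α) (Mem : (α → ℝ) → Prop) (N : (α → ℝ) → ℝ) : Set (α → ℝ) :=
  {f | Mem f ∧ ∀ u : ℕ → (α → ℝ), (∀ n, Mem (u n)) →
    (∀ n, ∀ᵐ x ∂μ, 0 ≤ u n x ∧ u n x ≤ |f x|) →
    (∀ n, ∀ᵐ x ∂μ, u (n + 1) x ≤ u n x) →
    (∀ᵐ x ∂μ, Tendsto (fun n => u n x) atTop (𝓝 0)) →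
    Tendsto (fun n => N (u n)) atTop (𝓝 0)}

/-- The ideal `X_a` of order continuous elements of a Banach ideal space `X`. -/
def oc (X : BanachIdealSpace α μ) : Set (α → ℝ) := ocSet μ X.Mem X.N

/-- An **order ideal** of a Banach ideal space: a closed solid linear subspace. -/
structure IsOrderIdeal (X : BanachIdealSpace α μ) (J : Set (α → ℝ)) : Prop where
  subset : ∀ f ∈ J, X.Mem f
  zero : (0 : α → ℝ) ∈ J
  add : ∀ f g, f ∈ J → g ∈ J → f + g ∈ J
  smul : ∀ (c : ℝ) f, f ∈ J → c • f ∈ J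
  solid : ∀ f g, f ∈ J → X.Mem g → (∀ᵐ x ∂μ, |g x| ≤ |f x|) → g ∈ J
  closed : ∀ (u : ℕ → (α → ℝ)) f, (∀ n, u n ∈ J) → X.Mem f →
    Tendsto (fun n => X.N (f - u n)) atTop (𝓝 0) → f ∈ J

/-- The **Fatou property** of a Banach ideal space. -/
def Fatou (X : BanachIdealSpace α μ) : Prop :=
  ∀ (u : ℕ → (α → ℝ)) (f : α → ℝ), (∀ n, X.Mem (u n)) → AEMeasurable f μ →
    (∀ᵐ x ∂μ, 0 ≤ u 0 x) → (∀ᵐ x ∂μ, Monotone fun n => u n x) →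
    (∀ᵐ x ∂μ, Tendsto (fun n => u n x) atTop (𝓝 (f x))) →
    BddAbove (Set.range fun n => X.N (u n)) →
    X.Mem f ∧ Tendsto (fun n => X.N (u n)) atTop (𝓝 (X.N f))

/-- The **semi-Fatou property**: if `0 ≤ uₙ ↑ f ∈ X` then `‖uₙ‖ ↑ ‖f‖`. -/
def SemiFatou (X : BanachIdealSpace α μ) : Prop :=
  ∀ (u : ℕ → (α → ℝ)) (f : α → ℝ), (∀ n, X.Mem (u n)) → X.Mem f →
    (∀ᵐ x ∂μ, 0 ≤ u 0 x) → (∀ᵐ x ∂μ, Monotone fun n => u n x) →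
    (∀ᵐ x ∂μ, Tendsto (fun n => u n x) atTop (𝓝 (f x))) →
    Tendsto (fun n => X.N (u n)) atTop (𝓝 (X.N f))

/-- A Banach ideal space is **rearrangement invariant (symmetric)**: equimeasurable
functions belong to the space simultaneously and have equal norms. -/
def Symmetric (X : BanachIdealSpace α μ) : Prop :=
  ∀ f g, AEMeasurable f μ →
    (∀ lam : ℝ, 0 < lam → μ {x | lam < |f x|} = μ {x | lam < |g x|}) →
    X.Mem g → X.Mem f ∧ X.N f = X.N g

/-- The **non-increasing rearrangement** of a function `f` (w.r.t. the measure `μ`). -/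
noncomputable def rear (μ : Measure α) (f : α → ℝ) (t : ℝ) : ℝ :=
  sInf {lam : ℝ | 0 < lam ∧ μ {x | lam < |f x|} ≤ ENNReal.ofReal t}

/-- A (generalized) function space given by `(Mem, N)` contains a **lattice isometric copy
of `ℓ∞`**: there is a linear map from bounded sequences which preserves absolute values
(hence the lattice operations) and is an isometry for the sup norm on bounded sequences. -/
def HasLatticeCopyLinf (Mem : (α → ℝ) → Prop) (N : (α → ℝ) → ℝ) : Prop :=
  ∃ T : (ℕ → ℝ) → (α → ℝ),
    (∀ x y, T (x + y) = T x + T y) ∧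
    (∀ (c : ℝ) x, T (c • x) = c • T x) ∧
    (∀ x, T (fun n => |x n|) = fun t => |T x t|) ∧
    (∀ x : ℕ → ℝ, BddAbove (Set.range fun n => |x n|) →
      Mem (T x) ∧ N (T x) = ⨆ n, |x n|)

end BanachIdealSpace

open BanachIdealSpace
open scoped ENNReal NNReal

/-- The Lorentz functional `‖f‖_{Λ_φ} = ∫₀^∞ f*(t) φ'(t) dt` (as an extended real). -/
noncomputable def lorentzNormE (phi : ℝ → ℝ) (f : ℝ → ℝ) : ℝ≥0∞ :=
  ∫⁻ t in Set.Ioi (0 : ℝ),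
    ENNReal.ofReal (rear (volume.restrict (Set.Ioi (0 : ℝ))) f t * deriv phi t)

/-- Membership in the Lorentz space `Λ_φ`. -/
def lorentzMem (phi : ℝ → ℝ) (f : ℝ → ℝ) : Prop :=
  AEMeasurable f (volume.restrict (Set.Ioi (0 : ℝ))) ∧ lorentzNormE phi f < ⊤

/-- The Lorentz norm of `Λ_φ`. -/
noncomputable def lorentzNorm (phi : ℝ → ℝ) (f : ℝ → ℝ) : ℝ :=
  (lorentzNormE phi f).toReal


section AuxLorentz

section PhiFacts

variable {phi : ℝ → ℝ}

lemma phi_nonneg (hmono : StrictMonoOn phi (Set.Ioi (0:ℝ)))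
    (h0 : Tendsto phi (𝓝[>] (0:ℝ)) (𝓝 0)) {t : ℝ} (ht : 0 < t) : 0 ≤ phi t := by
  refine le_of_tendsto h0 ?_
  filter_upwards [Ioo_mem_nhdsGT_of_mem (by constructor <;> simp [ht] : (0:ℝ) ∈ Ico 0 t)]
    with u hu
  exact (hmono.monotoneOn) hu.1 ht (le_of_lt hu.2)

lemma phi_pos (hmono : StrictMonoOn phi (Set.Ioi (0:ℝ)))
    (h0 : Tendsto phi (𝓝[>] (0:ℝ)) (𝓝 0)) {t : ℝ} (ht : 0 < t) : 0 < phi t := by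
  have h2 : 0 < t/2 := by linarith
  exact lt_of_le_of_lt (phi_nonneg hmono h0 h2) (hmono h2 ht (by linarith))

lemma phi_ae_diff (hmono : StrictMonoOn phi (Set.Ioi (0:ℝ)))
    (h0 : Tendsto phi (𝓝[>] (0:ℝ)) (𝓝 0)) :
    ∀ᵐ t : ℝ, t ∈ Ioi (0:ℝ) → DifferentiableAt ℝ phi t := by
  set psi : ℝ → ℝ := fun t => if 0 < t then phi t else 0 with hpsi
  have hpsimono : Monotone psi := by
    intro a b hab
    simp only [hpsi]
    by_cases ha : 0 < a
    · rw [if_pos ha, if_pos (lt_of_lt_of_le ha hab)]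
      exact hmono.monotoneOn ha (lt_of_lt_of_le ha hab) hab
    · rw [if_neg ha]
      by_cases hb : 0 < b
      · rw [if_pos hb]; exact phi_nonneg hmono h0 hb
      · rw [if_neg hb]
  filter_upwards [hpsimono.ae_differentiableAt] with t hdiff ht
  have hev : psi =ᶠ[𝓝 t] phi := by
    filter_upwards [Ioi_mem_nhds ht] with u hu
    simp only [hpsi]
    rw [if_pos (mem_Ioi.mp hu)]
  exact hev.symm.differentiableAt_iff.mpr hdiff

lemma slope_le_deriv (hconc : ConcaveOn ℝ (Set.Ioi (0:ℝ)) phi)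
    {t h : ℝ} (ht : 0 < t) (hh : 0 < h) (hd : DifferentiableAt ℝ phi t) :
    (phi (t + h) - phi t) / h ≤ deriv phi t := by
  have hts : Tendsto (slope phi t) (𝓝[>] t) (𝓝 (deriv phi t)) :=
    ((hasDerivAt_iff_tendsto_slope.1 hd.hasDerivAt).mono_left
      (nhdsWithin_mono t (fun x hx => ne_of_gt hx)))
  have key : (phi (t + h) - phi t) / h ≤ deriv phi t := by
    have : slope phi t (t + h) ≤ deriv phi t := by
      refine ge_of_tendsto hts ?_
      filter_upwards [Ioc_mem_nhdsGT_of_mem (by constructor <;> simp [hh, le_refl] :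
        t ∈ Ico t (t + h))] with s hs
      refine hconc.slope_anti ht ?_ ?_ hs.2
      · exact ⟨lt_trans ht hs.1, ne_of_gt hs.1⟩
      · refine ⟨show (0:ℝ) < t + h by linarith, ?_⟩
        simp only [mem_singleton_iff]
        intro hc; linarith
    rwa [slope_def_field, add_sub_cancel_left] at this
  exact key

lemma deriv_le_slope (hconc : ConcaveOn ℝ (Set.Ioi (0:ℝ)) phi)
    {t h : ℝ} (hh : 0 < h) (hht : h < t) (hd : DifferentiableAt ℝ phi t) :
    deriv phi t ≤ (phi t - phi (t - h)) / h := by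
  have hts : Tendsto (slope phi t) (𝓝[<] t) (𝓝 (deriv phi t)) :=
    ((hasDerivAt_iff_tendsto_slope.1 hd.hasDerivAt).mono_left
      (nhdsWithin_mono t (fun x hx => ne_of_lt hx)))
  have : deriv phi t ≤ slope phi t (t - h) := by
    refine le_of_tendsto hts ?_
    filter_upwards [Ico_mem_nhdsLT_of_mem (by constructor <;> [linarith; exact le_refl t] :
      t ∈ Ioc (t - h) t)] with s hs
    have ht : 0 < t := by linarith
    refine hconc.slope_anti ht ⟨show (0:ℝ) < t - h by linarith, ?_⟩
      ⟨show (0:ℝ) < s by linarith [hs.1], ?_⟩ hs.1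
    · simp only [mem_singleton_iff]; intro hc; linarith
    · simp only [mem_singleton_iff]; intro hc; linarith [hs.2]
  rw [slope_def_field] at this
  calc deriv phi t ≤ (phi (t - h) - phi t) / (t - h - t) := this
    _ = (phi t - phi (t - h)) / h := by
        rw [show t - h - t = -h by ring, div_neg, ← neg_div, neg_sub]

end PhiFacts

section IntLemmas

variable {phi : ℝ → ℝ}

lemma deriv_nonneg' (hmono : StrictMonoOn phi (Set.Ioi (0:ℝ)))
    (hconc : ConcaveOn ℝ (Set.Ioi (0:ℝ)) phi) {t : ℝ} (ht : 0 < t) :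
    0 ≤ deriv phi t := by
  by_cases hd : DifferentiableAt ℝ phi t
  · refine le_trans ?_ (slope_le_deriv hconc ht one_pos hd)
    have : phi t ≤ phi (t + 1) := hmono.monotoneOn ht (by simp; linarith) (by linarith)
    rw [div_one]; linarith
  · simp [deriv_zero_of_not_differentiableAt hd]

lemma phi_ii (hmono : StrictMonoOn phi (Set.Ioi (0:ℝ))) {a b : ℝ} (ha : 0 < a) (hab : a ≤ b) :
    IntervalIntegrable phi volume a b := by
  refine (hmono.monotoneOn.mono ?_).intervalIntegrable
  rw [uIcc_of_le hab]
  exact fun x hx => lt_of_lt_of_le ha hx.1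

lemma int_const_le (hmono : StrictMonoOn phi (Set.Ioi (0:ℝ))) {c h : ℝ} (hc : 0 < c) (hh : 0 < h) :
    h * phi c ≤ ∫ t in c..c + h, phi t := by
  have := intervalIntegral.integral_mono_on (by linarith : c ≤ c + h)
    (intervalIntegrable_const (c := phi c)) (phi_ii hmono hc (by linarith))
    (fun x hx => hmono.monotoneOn hc (lt_of_lt_of_le hc hx.1) hx.1)
  simpa [mul_comm] using this

lemma int_le_const (hmono : StrictMonoOn phi (Set.Ioi (0:ℝ))) {c h : ℝ} (hc : 0 < c - h)
    (hh : 0 < h) :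
    ∫ t in c - h..c, phi t ≤ h * phi c := by
  have hc0 : 0 < c := by linarith
  have := intervalIntegral.integral_mono_on (by linarith : c - h ≤ c)
    (phi_ii hmono hc (by linarith)) (intervalIntegrable_const (c := phi c))
    (fun x hx => hmono.monotoneOn (lt_of_lt_of_le hc hx.1) hc0 hx.2)
  simpa [mul_comm] using this

lemma lint_Ioc_lower (hmono : StrictMonoOn phi (Set.Ioi (0:ℝ)))
    (hconc : ConcaveOn ℝ (Set.Ioi (0:ℝ)) phi) (h0 : Tendsto phi (𝓝[>] (0:ℝ)) (𝓝 0))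
    {a b h : ℝ} (ha : 0 < a) (hh : 0 < h) (hab : a ≤ b) :
    ENNReal.ofReal (phi b - phi (a + h)) ≤ ∫⁻ t in Set.Ioc a b, ENNReal.ofReal (deriv phi t) := by
  set g : ℝ → ℝ := fun t => (phi (t + h) - phi t) / h with hg
  have hint1 : IntervalIntegrable phi volume a b := phi_ii hmono ha hab
  have hint2 : IntervalIntegrable (fun t => phi (t + h)) volume a b := by
    have h2 : IntervalIntegrable phi volume (a + h) (b + h) := phi_ii hmono (by linarith) (by linarith)
    simpa using h2.comp_add_right h
  have hgii : IntervalIntegrable g volume a b := (hint2.sub hint1).div_const h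
  have hgint : IntegrableOn g (Set.Ioc a b) volume :=
    (intervalIntegrable_iff_integrableOn_Ioc_of_le hab).mp hgii
  have hgnn : 0 ≤ᵐ[volume.restrict (Set.Ioc a b)] g := by
    filter_upwards [ae_restrict_mem measurableSet_Ioc] with t ht
    have h1 : 0 < t := lt_trans ha ht.1
    have : phi t ≤ phi (t + h) := hmono.monotoneOn h1 (by simp; linarith) (by linarith)
    simp only [hg]
    exact div_nonneg (by linarith) hh.le
  have step1 : ∫⁻ t in Set.Ioc a b, ENNReal.ofReal (g t)
      ≤ ∫⁻ t in Set.Ioc a b, ENNReal.ofReal (deriv phi t) := by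
    refine lintegral_mono_ae ?_
    filter_upwards [ae_restrict_of_ae (phi_ae_diff hmono h0), ae_restrict_mem measurableSet_Ioc]
      with t hdiff ht
    have h1 : 0 < t := lt_trans ha ht.1
    exact ENNReal.ofReal_le_ofReal (slope_le_deriv hconc h1 hh (hdiff h1))
  have step2 : ∫⁻ t in Set.Ioc a b, ENNReal.ofReal (g t)
      = ENNReal.ofReal (∫ t in Set.Ioc a b, g t) :=
    (ofReal_integral_eq_lintegral_ofReal hgint hgnn).symm
  refine le_trans ?_ step1
  rw [step2]
  refine ENNReal.ofReal_le_ofReal ?_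
  -- integral computation
  have e1 : ∫ t in Set.Ioc a b, g t = ∫ t in a..b, g t := (intervalIntegral.integral_of_le hab).symm
  have e2 : ∫ t in a..b, g t = ((∫ t in a + h..b + h, phi t) - ∫ t in a..b, phi t) / h := by
    simp only [hg, div_eq_mul_inv, intervalIntegral.integral_mul_const,
      intervalIntegral.integral_sub hint2 hint1, intervalIntegral.integral_comp_add_right]
  have hii1 : IntervalIntegrable phi volume a (a + h) := phi_ii hmono ha (by linarith)
  have hii2 : IntervalIntegrable phi volume (a + h) (b + h) := phi_ii hmono (by linarith) (by linarith)
  have hii3 : IntervalIntegrable phi volume a (b + h) := phi_ii hmono ha (by linarith)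
  have hii4 : IntervalIntegrable phi volume b (b + h) := phi_ii hmono (lt_of_lt_of_le ha hab) (by linarith)
  have adj1 : (∫ t in a..a + h, phi t) + ∫ t in a + h..b + h, phi t = ∫ t in a..b + h, phi t :=
    intervalIntegral.integral_add_adjacent_intervals hii1 hii2
  have adj2 : (∫ t in a..b, phi t) + ∫ t in b..b + h, phi t = ∫ t in a..b + h, phi t :=
    intervalIntegral.integral_add_adjacent_intervals hint1 hii4
  have hB1 : h * phi b ≤ ∫ t in b..b + h, phi t := int_const_le hmono (lt_of_lt_of_le ha hab) hh
  have hB2 : ∫ t in a..a + h, phi t ≤ h * phi (a + h) := by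
    have := int_le_const hmono (c := a + h) (h := h) (by linarith) hh
    simpa using this
  rw [e1, e2, le_div_iff₀ hh]
  nlinarith [adj1, adj2, hB1, hB2]

lemma lint_Ioc_upper (hmono : StrictMonoOn phi (Set.Ioi (0:ℝ)))
    (hconc : ConcaveOn ℝ (Set.Ioi (0:ℝ)) phi) (h0 : Tendsto phi (𝓝[>] (0:ℝ)) (𝓝 0))
    {a b h : ℝ} (ha : 0 < a) (hh : 0 < h) (hha : h < a) (hab : a ≤ b) :
    (∫⁻ t in Set.Ioc a b, ENNReal.ofReal (deriv phi t))
      ≤ ENNReal.ofReal (phi b - phi (a - h)) := by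
  set g : ℝ → ℝ := fun t => (phi t - phi (t - h)) / h with hg
  have hint1 : IntervalIntegrable phi volume a b := phi_ii hmono ha hab
  have hint2 : IntervalIntegrable (fun t => phi (t - h)) volume a b := by
    have h2 : IntervalIntegrable phi volume (a - h) (b - h) := phi_ii hmono (by linarith) (by linarith)
    simpa using h2.comp_sub_right h
  have hgii : IntervalIntegrable g volume a b := (hint1.sub hint2).div_const h
  have hgint : IntegrableOn g (Set.Ioc a b) volume :=
    (intervalIntegrable_iff_integrableOn_Ioc_of_le hab).mp hgii
  have hgnn : 0 ≤ᵐ[volume.restrict (Set.Ioc a b)] g := by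
    filter_upwards [ae_restrict_mem measurableSet_Ioc] with t ht
    have h1 : 0 < t := lt_trans ha ht.1
    have : phi (t - h) ≤ phi t := hmono.monotoneOn (by simp; linarith [ht.1]) h1 (by linarith)
    simp only [hg]
    exact div_nonneg (by linarith) hh.le
  have step1 : (∫⁻ t in Set.Ioc a b, ENNReal.ofReal (deriv phi t))
      ≤ ∫⁻ t in Set.Ioc a b, ENNReal.ofReal (g t) := by
    refine lintegral_mono_ae ?_
    filter_upwards [ae_restrict_of_ae (phi_ae_diff hmono h0), ae_restrict_mem measurableSet_Ioc]
      with t hdiff ht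
    have h1 : 0 < t := lt_trans ha ht.1
    exact ENNReal.ofReal_le_ofReal (deriv_le_slope hconc hh (lt_of_lt_of_le (by linarith) ht.1.le) (hdiff h1))
  have step2 : ∫⁻ t in Set.Ioc a b, ENNReal.ofReal (g t)
      = ENNReal.ofReal (∫ t in Set.Ioc a b, g t) :=
    (ofReal_integral_eq_lintegral_ofReal hgint hgnn).symm
  refine le_trans step1 ?_
  rw [step2]
  refine ENNReal.ofReal_le_ofReal ?_
  have e1 : ∫ t in Set.Ioc a b, g t = ∫ t in a..b, g t := (intervalIntegral.integral_of_le hab).symm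
  have e2 : ∫ t in a..b, g t = ((∫ t in a..b, phi t) - ∫ t in a - h..b - h, phi t) / h := by
    simp only [hg, div_eq_mul_inv, intervalIntegral.integral_mul_const,
      intervalIntegral.integral_sub hint1 hint2, intervalIntegral.integral_comp_sub_right]
  have hii1 : IntervalIntegrable phi volume (a - h) a := phi_ii hmono (by linarith) (by linarith)
  have hii2 : IntervalIntegrable phi volume (a - h) (b - h) := phi_ii hmono (by linarith) (by linarith)
  have hii4 : IntervalIntegrable phi volume (b - h) b := phi_ii hmono (by linarith) (by linarith)
  have adj1 : (∫ t in a - h..a, phi t) + ∫ t in a..b, phi t = ∫ t in a - h..b, phi t :=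
    intervalIntegral.integral_add_adjacent_intervals hii1 hint1
  have adj2 : (∫ t in a - h..b - h, phi t) + ∫ t in b - h..b, phi t = ∫ t in a - h..b, phi t :=
    intervalIntegral.integral_add_adjacent_intervals hii2 hii4
  have hB1 : ∫ t in b - h..b, phi t ≤ h * phi b := int_le_const hmono (by linarith) hh
  have hB2 : h * phi (a - h) ≤ ∫ t in a - h..a, phi t := by
    have := int_const_le hmono (c := a - h) (h := h) (by linarith) hh
    simpa using this
  rw [e1, e2, div_le_iff₀ hh]
  nlinarith [adj1, adj2, hB1, hB2]

end IntLemmas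

section IoiLemmas

variable {phi : ℝ → ℝ}

lemma lint_Ioi0_lower (hmono : StrictMonoOn phi (Set.Ioi (0:ℝ)))
    (hconc : ConcaveOn ℝ (Set.Ioi (0:ℝ)) phi) (h0 : Tendsto phi (𝓝[>] (0:ℝ)) (𝓝 0))
    {b : ℝ} (hb : 0 < b) :
    ENNReal.ofReal (phi b) ≤ ∫⁻ t in Set.Ioi (0:ℝ), ENNReal.ofReal (deriv phi t) := by
  have hinv : ∀ n : ℕ, (0:ℝ) < ((n:ℝ) + 1)⁻¹ := fun n => by positivity
  have hseq : ∀ n : ℕ, ENNReal.ofReal (phi (b + 1) - phi (((n:ℝ) + 1)⁻¹ + ((n:ℝ) + 1)⁻¹))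
      ≤ ∫⁻ t in Set.Ioi (0:ℝ), ENNReal.ofReal (deriv phi t) := by
    intro n
    refine le_trans (lint_Ioc_lower hmono hconc h0 (hinv n) (hinv n) ?_) (lintegral_mono_set ?_)
    · have : ((n:ℝ) + 1)⁻¹ ≤ 1 := by
        rw [inv_le_one_iff₀]; right; linarith [Nat.cast_nonneg (α := ℝ) n]
      linarith
    · exact fun x hx => lt_trans (hinv n) hx.1
  have htend : Tendsto (fun n : ℕ => ENNReal.ofReal (phi (b + 1)
      - phi (((n:ℝ) + 1)⁻¹ + ((n:ℝ) + 1)⁻¹))) atTop (𝓝 (ENNReal.ofReal (phi (b + 1) - 0))) := by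
    refine (ENNReal.continuous_ofReal.continuousAt.tendsto).comp ?_
    refine Tendsto.const_sub _ ?_
    refine h0.comp ?_
    refine tendsto_nhdsWithin_of_tendsto_nhds_of_eventually_within _ ?_
      (Eventually.of_forall fun n => Set.mem_Ioi.mpr (by positivity))
    have h1 : Tendsto (fun n : ℕ => ((n:ℝ) + 1)⁻¹) atTop (𝓝 0) :=
      tendsto_one_div_add_atTop_nhds_zero_nat.congr (by intro n; rw [one_div])
    simpa using h1.add h1
  have := le_of_tendsto htend (Eventually.of_forall hseq)
  refine le_trans (ENNReal.ofReal_le_ofReal ?_) (by simpa using this)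
  have : phi b ≤ phi (b + 1) := hmono.monotoneOn hb (by simp; linarith) (by linarith)
  linarith

lemma lint_Ioi_top (hmono : StrictMonoOn phi (Set.Ioi (0:ℝ)))
    (hconc : ConcaveOn ℝ (Set.Ioi (0:ℝ)) phi) (h0 : Tendsto phi (𝓝[>] (0:ℝ)) (𝓝 0))
    (hub : ¬BddAbove (phi '' Set.Ioi (0:ℝ))) {c : ℝ} (hc : 0 ≤ c) :
    ∫⁻ t in Set.Ioi c, ENNReal.ofReal (deriv phi t) = ⊤ := by
  refine ENNReal.eq_top_of_forall_nnreal_le fun r => ?_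
  obtain ⟨y, hy, hry⟩ := not_bddAbove_iff.mp hub ((r:ℝ) + phi (c + 2))
  obtain ⟨t, ht, rfl⟩ := hy
  set b := max t (c + 2) with hbdef
  have htpos : 0 < t := ht
  have hbt : phi t ≤ phi b := hmono.monotoneOn ht
    (by simp [hbdef]; right; linarith) (le_max_left _ _)
  have key : ENNReal.ofReal (phi b - phi (c + 2))
      ≤ ∫⁻ t in Set.Ioi c, ENNReal.ofReal (deriv phi t) := by
    have h1 : (0:ℝ) < c + 1 := by linarith
    have := lint_Ioc_lower hmono hconc h0 (a := c + 1) (b := b) (h := 1) h1 one_pos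
      (le_trans (by linarith) (le_max_right _ _))
    refine le_trans ?_ (le_trans this (lintegral_mono_set fun x hx => lt_trans (by linarith) hx.1))
    have : c + 1 + 1 = c + 2 := by ring
    rw [this]
  refine le_trans ?_ key
  rw [← ENNReal.ofReal_coe_nnreal]
  exact ENNReal.ofReal_le_ofReal (by linarith)

lemma lint_Ioi0_eq (hmono : StrictMonoOn phi (Set.Ioi (0:ℝ)))
    (hconc : ConcaveOn ℝ (Set.Ioi (0:ℝ)) phi) (h0 : Tendsto phi (𝓝[>] (0:ℝ)) (𝓝 0))
    (hub : BddAbove (phi '' Set.Ioi (0:ℝ))) :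
    ∫⁻ t in Set.Ioi (0:ℝ), ENNReal.ofReal (deriv phi t)
      = ENNReal.ofReal (sSup (phi '' Set.Ioi (0:ℝ))) := by
  set M := sSup (phi '' Set.Ioi (0:ℝ)) with hM
  have hne : (phi '' Set.Ioi (0:ℝ)).Nonempty := ⟨phi 1, ⟨1, by simp, rfl⟩⟩
  have hle : ∀ t : ℝ, 0 < t → phi t ≤ M := fun t ht => le_csSup hub ⟨t, ht, rfl⟩
  set f : ℝ → ℝ≥0∞ := fun t => ENNReal.ofReal (deriv phi t) with hf
  have hfm : Measurable f := (measurable_deriv phi).ennreal_ofReal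
  set s : ℕ → Set ℝ := fun n => Set.Ioc ((n:ℝ) + 1)⁻¹ ((n:ℝ) + 1) with hs
  have hsm : ∀ n, MeasurableSet (s n) := fun n => measurableSet_Ioc
  have hsmono : Monotone s := by
    intro m n hmn
    refine Set.Ioc_subset_Ioc ?_ ?_
    · apply inv_anti₀ (by positivity)
      simp [Nat.cast_le.mpr hmn]
    · simp [Nat.cast_le.mpr hmn]
  have hU : Set.Ioi (0:ℝ) = ⋃ n, s n := by
    ext t
    simp only [Set.mem_Ioi, Set.mem_iUnion, hs, Set.mem_Ioc]
    constructor
    · intro ht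
      obtain ⟨n, hn⟩ := exists_nat_ge (max t t⁻¹)
      refine ⟨n, ?_, ?_⟩
      · rw [inv_lt_comm₀ (by positivity) ht]
        exact lt_of_le_of_lt (le_max_right _ _) (by linarith [le_max_right t t⁻¹,
          (le_max_iff.mpr (Or.inr (le_refl t⁻¹))).trans hn])
      · linarith [(le_max_left t t⁻¹).trans hn]
    · rintro ⟨n, h1, _⟩
      exact lt_trans (by positivity) h1
  -- upper bound for each piece
  have hpiece : ∀ n, (∫⁻ t in s n, f t) ≤ ENNReal.ofReal M := by
    intro n
    have ha : (0:ℝ) < ((n:ℝ) + 1)⁻¹ := by positivity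
    have hab : ((n:ℝ) + 1)⁻¹ ≤ (n:ℝ) + 1 := by
      have h9 : ((n:ℝ) + 1)⁻¹ ≤ 1 := by
        rw [inv_le_one_iff₀]; right; linarith [Nat.cast_nonneg (α := ℝ) n]
      linarith [Nat.cast_nonneg (α := ℝ) n]
    have := lint_Ioc_upper hmono hconc h0 (a := ((n:ℝ) + 1)⁻¹) (b := (n:ℝ) + 1)
      (h := ((n:ℝ) + 1)⁻¹ / 2) ha (by positivity) (by linarith) hab
    refine le_trans this (ENNReal.ofReal_le_ofReal ?_)
    have h2 : (0:ℝ) < ((n:ℝ) + 1)⁻¹ - ((n:ℝ) + 1)⁻¹ / 2 := by linarith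
    have := phi_nonneg hmono h0 h2
    have := hle _ (show (0:ℝ) < (n:ℝ) + 1 by positivity)
    linarith
  -- lintegral over Ioi 0 as iSup
  have hiSup : (∫⁻ t in Set.Ioi (0:ℝ), f t) = ⨆ n, ∫⁻ t in s n, f t := by
    rw [hU]
    have h1 : ∀ n, (∫⁻ t in s n, f t) = ∫⁻ t, (s n).indicator f t := fun n =>
      (lintegral_indicator (hsm n) f).symm
    have h2 : (∫⁻ t in ⋃ n, s n, f t) = ∫⁻ t, ((⋃ n, s n).indicator f) t :=
      (lintegral_indicator (MeasurableSet.iUnion hsm) f).symm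
    rw [h2]
    simp only [h1]
    rw [← lintegral_iSup (fun n => hfm.indicator (hsm n))
      (fun m n hmn => Set.indicator_le_indicator_of_subset (hsmono hmn) (fun t => zero_le))]
    congr 1
    funext t
    by_cases ht : t ∈ ⋃ n, s n
    · obtain ⟨n, hn⟩ := Set.mem_iUnion.mp ht
      rw [Set.indicator_of_mem ht]
      refine le_antisymm ?_ (iSup_le fun m => ?_)
      · calc f t = (s n).indicator f t := (Set.indicator_of_mem hn f).symm
          _ ≤ ⨆ m, (s m).indicator f t := le_iSup (fun m => (s m).indicator f t) n
      · by_cases hm : t ∈ s m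
        · rw [Set.indicator_of_mem hm]
        · rw [Set.indicator_of_notMem hm]; exact zero_le
    · have hn : ∀ n, t ∉ s n := fun n hn => ht (Set.mem_iUnion.mpr ⟨n, hn⟩)
      rw [Set.indicator_of_notMem ht]
      simp [Set.indicator_of_notMem (hn _)]
  refine le_antisymm ?_ ?_
  · rw [hiSup]
    exact iSup_le hpiece
  · -- lower bound: ofReal M ≤ ∫⁻
    refine ENNReal.le_of_forall_pos_le_add fun ε hε hfin => ?_
    obtain ⟨y, hy, hylt⟩ := exists_lt_of_lt_csSup hne
      (sub_lt_self M (by exact_mod_cast hε))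
    obtain ⟨t, ht, rfl⟩ := hy
    have h1 : ENNReal.ofReal (phi t) ≤ ∫⁻ t in Set.Ioi (0:ℝ), f t :=
      lint_Ioi0_lower hmono hconc h0 ht
    have hylt2 : M - (ε:ℝ) < phi t := by exact_mod_cast hylt
    have h2 : ENNReal.ofReal M ≤ ENNReal.ofReal (phi t) + ENNReal.ofReal ε := by
      refine le_trans (ENNReal.ofReal_le_ofReal (show M ≤ phi t + ε by linarith)) ?_
      exact ENNReal.ofReal_add_le
    refine le_trans h2 ?_
    have : ENNReal.ofReal (ε:ℝ) = (ε : ℝ≥0∞) := ENNReal.ofReal_coe_nnreal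
    rw [this]
    exact add_le_add h1 (le_refl _)

end IoiLemmas

section RearLemmas

lemma rear_nonneg' {α : Type*} [MeasurableSpace α] (μ : Measure α) (f : α → ℝ) (t : ℝ) :
    0 ≤ rear μ f t :=
  Real.sInf_nonneg fun x hx => hx.1.le

lemma rear_le_rear {α : Type*} [MeasurableSpace α] (μ : Measure α) {f g : α → ℝ} {t : ℝ}
    (hfg : ∀ᵐ x ∂μ, |g x| ≤ |f x|)
    (hne : ∃ lam : ℝ, 0 < lam ∧ μ {x | lam < |f x|} ≤ ENNReal.ofReal t) :
    rear μ g t ≤ rear μ f t := by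
  have hsub : {lam : ℝ | 0 < lam ∧ μ {x | lam < |f x|} ≤ ENNReal.ofReal t}
      ⊆ {lam : ℝ | 0 < lam ∧ μ {x | lam < |g x|} ≤ ENNReal.ofReal t} := by
    rintro lam ⟨h1, h2⟩
    refine ⟨h1, le_trans (measure_mono_ae ?_) h2⟩
    filter_upwards [hfg] with x hx hgx
    exact lt_of_lt_of_le hgx hx
  exact csInf_le_csInf ⟨0, fun lam hl => hl.1.le⟩ hne hsub

lemma layer_preimage_top (n : ℕ) :
    (volume.restrict (Set.Ioi (0:ℝ))) {t : ℝ | (Nat.unpair ⌊t⌋₊).1 = n} = ⊤ := by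
  set N : ℕ → ℕ := fun k => Nat.pair n (k + 1) with hN
  set U : Set ℝ := ⋃ k : ℕ, Set.Ico ((N k : ℕ) : ℝ) ((N k : ℕ) + 1) with hU
  have hNz : ∀ k, N k ≠ 0 := by
    intro k hk
    have h00 : Nat.pair 0 0 = 0 := rfl
    rw [hN] at hk
    simp only at hk
    rw [← h00, Nat.pair_eq_pair] at hk
    exact Nat.succ_ne_zero k hk.2
  have hfloor : ∀ k, ∀ t : ℝ, t ∈ Set.Ico ((N k : ℕ) : ℝ) ((N k : ℕ) + 1) → ⌊t⌋₊ = N k := by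
    intro k t ht
    rw [Nat.floor_eq_iff' (Nat.pos_of_ne_zero (hNz k)).ne']
    exact ⟨ht.1, ht.2⟩
  have hUm : MeasurableSet U := MeasurableSet.iUnion fun k => measurableSet_Ico
  have hUsub : U ⊆ Set.Ioi (0:ℝ) := by
    rintro t ⟨S, ⟨k, rfl⟩, ht⟩
    simp only [Set.mem_Ico] at ht
    have h1 : (1:ℝ) ≤ ((N k : ℕ) : ℝ) := by
      exact_mod_cast Nat.one_le_iff_ne_zero.mpr (hNz k)
    exact lt_of_lt_of_le one_pos (le_trans h1 ht.1)
  have hUsub2 : U ⊆ {t : ℝ | (Nat.unpair ⌊t⌋₊).1 = n} := by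
    rintro t ⟨S, ⟨k, rfl⟩, ht⟩
    simp only [Set.mem_setOf_eq]
    rw [hfloor k t ht, hN]
    simp [Nat.unpair_pair]
  have hdisj : Pairwise (Function.onFun Disjoint
      fun k : ℕ => Set.Ico ((N k : ℕ) : ℝ) ((N k : ℕ) + 1)) := by
    intro k l hkl
    rw [Function.onFun, Set.disjoint_left]
    intro t htk htl
    have h1 := hfloor k t htk
    have h2 := hfloor l t htl
    rw [h1] at h2
    rw [hN] at h2
    simp only [Nat.pair_eq_pair] at h2
    exact hkl (Nat.succ_injective h2.2)
  have hvol : volume U = ⊤ := by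
    rw [hU, measure_iUnion hdisj fun k => measurableSet_Ico]
    have : ∀ k : ℕ, volume (Set.Ico ((N k : ℕ) : ℝ) ((N k : ℕ) + 1)) = 1 := by
      intro k
      rw [Real.volume_Ico]
      simp
    simp only [this]
    exact ENNReal.tsum_const_eq_top_of_ne_zero one_ne_zero
  rw [eq_top_iff]
  calc (⊤:ℝ≥0∞) = volume U := hvol.symm
    _ = (volume.restrict (Set.Ioi (0:ℝ))) U := by
        rw [Measure.restrict_apply hUm, Set.inter_eq_self_of_subset_left hUsub]
    _ ≤ _ := measure_mono hUsub2

lemma rear_layer {x : ℕ → ℝ} {c : ℝ} (hc : 0 < c)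
    (hbdd : BddAbove (Set.range fun n => |x n|)) (t : ℝ) :
    rear (volume.restrict (Set.Ioi (0:ℝ))) (fun s : ℝ => x ((Nat.unpair ⌊s⌋₊).1) * c) t
      = (⨆ n, |x n|) * c := by
  set μ0 := volume.restrict (Set.Ioi (0:ℝ)) with hμ0
  set g : ℝ → ℝ := fun s => x ((Nat.unpair ⌊s⌋₊).1) * c with hg
  set s0 := (⨆ n, |x n|) * c with hs0
  have hS0 : 0 ≤ s0 := mul_nonneg (le_trans (abs_nonneg (x 0)) (le_ciSup hbdd 0)) hc.le
  have hgabs : ∀ s : ℝ, |g s| = |x ((Nat.unpair ⌊s⌋₊).1)| * c := fun s => by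
    rw [hg]; simp only; rw [abs_mul, abs_of_pos hc]
  have hids : ∀ n, |x n| * c ≤ s0 := fun n =>
    mul_le_mul_of_nonneg_right (le_ciSup hbdd n) hc.le
  have hlt : ∀ lam : ℝ, lam < s0 → ∃ n, lam < |x n| * c := by
    intro lam hlam
    have h1 : lam / c < ⨆ n, |x n| := (div_lt_iff₀ hc).mpr hlam
    obtain ⟨n, hn⟩ := (lt_ciSup_iff hbdd).mp h1
    exact ⟨n, (div_lt_iff₀ hc).mp hn⟩
  have hset : {lam : ℝ | 0 < lam ∧ μ0 {s : ℝ | lam < |g s|} ≤ ENNReal.ofReal t}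
      = {lam : ℝ | 0 < lam ∧ s0 ≤ lam} := by
    ext lam
    simp only [Set.mem_setOf_eq]
    constructor
    · rintro ⟨h1, h2⟩
      refine ⟨h1, ?_⟩
      by_contra hcon
      push_neg at hcon
      obtain ⟨n, hn⟩ := hlt lam hcon
      have hsub : {s : ℝ | (Nat.unpair ⌊s⌋₊).1 = n} ⊆ {s : ℝ | lam < |g s|} := by
        intro s hs
        rw [Set.mem_setOf_eq] at hs ⊢
        rw [hgabs, hs]
        exact hn
      have htop : (⊤:ℝ≥0∞) ≤ μ0 {s : ℝ | lam < |g s|} := by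
        rw [← layer_preimage_top n]
        exact measure_mono hsub
      exact (lt_irrefl (⊤:ℝ≥0∞)) (lt_of_le_of_lt (le_trans htop h2) ENNReal.ofReal_lt_top)
    · rintro ⟨h1, h2⟩
      refine ⟨h1, ?_⟩
      have hempty : {s : ℝ | lam < |g s|} = ∅ := by
        ext s
        simp only [Set.mem_setOf_eq, Set.mem_empty_iff_false, iff_false, not_lt]
        rw [hgabs]
        exact le_trans (hids _) h2
      simp [hempty]
  show sInf {lam : ℝ | 0 < lam ∧ μ0 {s : ℝ | lam < |g s|} ≤ ENNReal.ofReal t} = s0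
  rw [hset]
  rcases eq_or_lt_of_le hS0 with h | h
  · have heq : {lam : ℝ | 0 < lam ∧ s0 ≤ lam} = Set.Ioi (0:ℝ) := by
      ext lam
      simp only [Set.mem_setOf_eq, Set.mem_Ioi]
      exact ⟨fun hh => hh.1, fun hh => ⟨hh, le_trans h.symm.le hh.le⟩⟩
    rw [heq, csInf_Ioi, ← h]
  · have heq : {lam : ℝ | 0 < lam ∧ s0 ≤ lam} = Set.Ici s0 := by
      ext lam
      simp only [Set.mem_setOf_eq, Set.mem_Ici]
      exact ⟨fun hh => hh.2, fun hh => ⟨lt_of_lt_of_le h hh, hh⟩⟩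
    rw [heq, csInf_Ici]

end RearLemmas

section ReverseDir

variable {phi : ℝ → ℝ}

lemma lorentzNormE_layer (hmono : StrictMonoOn phi (Set.Ioi (0:ℝ)))
    (hconc : ConcaveOn ℝ (Set.Ioi (0:ℝ)) phi) {x : ℕ → ℝ} {c : ℝ} (hc : 0 < c)
    (hbdd : BddAbove (Set.range fun n => |x n|)) :
    lorentzNormE phi (fun s : ℝ => x ((Nat.unpair ⌊s⌋₊).1) * c)
      = ENNReal.ofReal ((⨆ n, |x n|) * c)
        * ∫⁻ t in Set.Ioi (0:ℝ), ENNReal.ofReal (deriv phi t) := by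
  have hS0 : 0 ≤ (⨆ n, |x n|) * c :=
    mul_nonneg (le_trans (abs_nonneg (x 0)) (le_ciSup hbdd 0)) hc.le
  rw [lorentzNormE]
  have hcong : ∀ᵐ t ∂(volume.restrict (Set.Ioi (0:ℝ))),
      ENNReal.ofReal (rear (volume.restrict (Set.Ioi (0:ℝ)))
          (fun s : ℝ => x ((Nat.unpair ⌊s⌋₊).1) * c) t * deriv phi t)
        = ENNReal.ofReal ((⨆ n, |x n|) * c) * ENNReal.ofReal (deriv phi t) := by
    filter_upwards [ae_restrict_mem measurableSet_Ioi] with t _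
    rw [rear_layer hc hbdd, ENNReal.ofReal_mul hS0]
  rw [lintegral_congr_ae hcong, lintegral_const_mul' _ _ ENNReal.ofReal_ne_top]

lemma reverse_dir (hmono : StrictMonoOn phi (Set.Ioi (0:ℝ)))
    (hconc : ConcaveOn ℝ (Set.Ioi (0:ℝ)) phi) (h0 : Tendsto phi (𝓝[>] (0:ℝ)) (𝓝 0))
    (hub : BddAbove (phi '' Set.Ioi (0:ℝ))) :
    HasLatticeCopyLinf (lorentzMem phi) (lorentzNorm phi) := by
  set M := sSup (phi '' Set.Ioi (0:ℝ)) with hM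
  have hMpos : 0 < M :=
    lt_of_lt_of_le (phi_pos hmono h0 one_pos) (le_csSup hub ⟨1, by simp, rfl⟩)
  have hMinv : 0 < M⁻¹ := inv_pos.mpr hMpos
  refine ⟨fun x => fun t => x ((Nat.unpair ⌊t⌋₊).1) * M⁻¹, ?_, ?_, ?_, ?_⟩
  · intro x y
    funext t
    simp only [Pi.add_apply]
    ring
  · intro c x
    funext t
    simp only [Pi.smul_apply, smul_eq_mul]
    ring
  · intro x
    funext t
    rw [abs_mul, abs_of_pos hMinv]
  · intro x hx
    have hnorm : lorentzNormE phi (fun t : ℝ => x ((Nat.unpair ⌊t⌋₊).1) * M⁻¹)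
        = ENNReal.ofReal ((⨆ n, |x n|) * M⁻¹) * ENNReal.ofReal M := by
      rw [lorentzNormE_layer hmono hconc hMinv hx, lint_Ioi0_eq hmono hconc h0 hub]
    have hSnn : 0 ≤ ⨆ n, |x n| := le_trans (abs_nonneg (x 0)) (le_ciSup hx 0)
    have heq : ENNReal.ofReal ((⨆ n, |x n|) * M⁻¹) * ENNReal.ofReal M
        = ENNReal.ofReal (⨆ n, |x n|) := by
      rw [← ENNReal.ofReal_mul (mul_nonneg hSnn hMinv.le)]
      congr 1
      field_simp
    have hmeas : AEMeasurable (fun t : ℝ => x ((Nat.unpair ⌊t⌋₊).1) * M⁻¹)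
        (volume.restrict (Set.Ioi (0:ℝ))) := by
      have : (fun t : ℝ => x ((Nat.unpair ⌊t⌋₊).1) * M⁻¹)
          = (fun n : ℕ => x ((Nat.unpair n).1) * M⁻¹) ∘ (fun t : ℝ => ⌊t⌋₊) := rfl
      rw [this]
      exact (measurable_from_nat.comp Nat.measurable_floor).aemeasurable
    refine ⟨⟨hmeas, ?_⟩, ?_⟩
    · rw [hnorm, heq]
      exact ENNReal.ofReal_lt_top
    · rw [lorentzNorm, hnorm, heq, ENNReal.toReal_ofReal hSnn]

end ReverseDir

section ForwardDir

variable {phi : ℝ → ℝ}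

lemma upperish_measurable {S : Set ℝ} (hS : ∀ a ∈ S, ∀ b : ℝ, a ≤ b → b ∈ S) :
    MeasurableSet S :=
  Set.OrdConnected.measurableSet ⟨fun _ ha _ _ z hz => hS _ ha z hz.1⟩

lemma antitoneOn_aemeasurable {f : ℝ → ℝ} (hf : AntitoneOn f (Set.Ioi (0:ℝ))) :
    AEMeasurable f (volume.restrict (Set.Ioi (0:ℝ))) := by
  set g : ℝ → ℝ := fun t => if 0 < t then f t else 0 with hg
  have hgm : Measurable g := by
    refine measurable_of_Iio fun c => ?_
    have hupper : MeasurableSet {t : ℝ | 0 < t ∧ f t < c} := by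
      refine upperish_measurable fun a ha b hab => ?_
      exact ⟨lt_of_lt_of_le ha.1 hab, lt_of_le_of_lt (hf (Set.mem_Ioi.mpr ha.1)
        (Set.mem_Ioi.mpr (lt_of_lt_of_le ha.1 hab)) hab) ha.2⟩
    rcases lt_or_ge (0:ℝ) c with hc | hc
    · have hid : g ⁻¹' Set.Iio c = {t : ℝ | 0 < t ∧ f t < c} ∪ Set.Iic 0 := by
        ext t
        simp only [Set.mem_preimage, Set.mem_Iio, Set.mem_union, Set.mem_setOf_eq, Set.mem_Iic, hg]
        rcases lt_or_ge (0:ℝ) t with ht | ht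
        · rw [if_pos ht]
          constructor
          · intro h; exact Or.inl ⟨ht, h⟩
          · rintro (⟨_, h⟩ | h)
            · exact h
            · linarith
        · rw [if_neg (not_lt.mpr ht)]
          constructor
          · intro _; exact Or.inr ht
          · intro _; exact hc
      rw [hid]
      exact hupper.union measurableSet_Iic
    · have hid : g ⁻¹' Set.Iio c = {t : ℝ | 0 < t ∧ f t < c} := by
        ext t
        simp only [Set.mem_preimage, Set.mem_Iio, Set.mem_setOf_eq, hg]
        rcases lt_or_ge (0:ℝ) t with ht | ht
        · rw [if_pos ht]
          exact ⟨fun h => ⟨ht, h⟩, fun h => h.2⟩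
        · rw [if_neg (not_lt.mpr ht)]
          constructor
          · intro h; linarith
          · rintro ⟨h1, _⟩; linarith
      rw [hid]
      exact hupper
  refine hgm.aemeasurable.congr ?_
  filter_upwards [ae_restrict_mem measurableSet_Ioi] with t ht
  exact if_pos (Set.mem_Ioi.mp ht)

lemma rear_le_of_mem {α : Type*} [MeasurableSpace α] {μ : Measure α} {f : α → ℝ} {t lam : ℝ}
    (h1 : 0 < lam) (h2 : μ {x | lam < |f x|} ≤ ENNReal.ofReal t) : rear μ f t ≤ lam :=
  csInf_le ⟨0, fun y hy => hy.1.le⟩ ⟨h1, h2⟩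

lemma rear_antitoneOn {α : Type*} [MeasurableSpace α] {μ : Measure α} {f : α → ℝ}
    (hne : ∀ t : ℝ, 0 < t → ∃ lam : ℝ, 0 < lam ∧ μ {x | lam < |f x|} ≤ ENNReal.ofReal t) :
    AntitoneOn (rear μ f) (Set.Ioi (0:ℝ)) := by
  intro t₁ h1 t₂ h2 h12
  refine csInf_le_csInf ⟨0, fun y hy => hy.1.le⟩ ?_ ?_
  · obtain ⟨lam, hl1, hl2⟩ := hne t₁ (Set.mem_Ioi.mp h1)
    exact ⟨lam, hl1, hl2⟩
  · rintro lam ⟨ha, hb⟩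
    exact ⟨ha, le_trans hb (ENNReal.ofReal_le_ofReal h12)⟩

lemma forward_dir (hmono : StrictMonoOn phi (Set.Ioi (0:ℝ)))
    (hconc : ConcaveOn ℝ (Set.Ioi (0:ℝ)) phi) (h0 : Tendsto phi (𝓝[>] (0:ℝ)) (𝓝 0))
    (hcopy : HasLatticeCopyLinf (lorentzMem phi) (lorentzNorm phi)) :
    BddAbove (phi '' Set.Ioi (0:ℝ)) := by
  by_contra hub
  obtain ⟨T, hTadd, hTsmul, hTabs, hTiso⟩ := hcopy
  -- T is nonneg / monotone on nonneg sequences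
  have hTpos : ∀ x : ℕ → ℝ, (∀ n, 0 ≤ x n) → ∀ t, 0 ≤ T x t := by
    intro x hx t
    have h1 : T (fun n => |x n|) = fun s => |T x s| := hTabs x
    have h2 : (fun n => |x n|) = x := funext fun n => abs_of_nonneg (hx n)
    rw [h2] at h1
    exact le_of_le_of_eq (abs_nonneg (T x t)) (congrFun h1 t).symm
  have hTmono : ∀ x y : ℕ → ℝ, (∀ n, 0 ≤ y n - x n) → ∀ t, T x t ≤ T y t := by
    intro x y hxy t
    have h1 : T (x + (y - x)) = T x + T (y - x) := hTadd x (y - x)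
    have h2 : x + (y - x) = y := by funext n; simp
    rw [h2] at h1
    have h3 : 0 ≤ T (y - x) t := hTpos _ (fun n => by simpa using hxy n) t
    calc T x t ≤ T x t + T (y - x) t := by linarith
      _ = T y t := by rw [h1, Pi.add_apply]
  set one : ℕ → ℝ := fun _ => 1 with hone
  set exk : ℕ → ℕ → ℝ := fun k n => if n = k then 1 else 0 with hexk
  set vxk : ℕ → ℕ → ℝ := fun k n => if n ≤ k then 1 else 0 with hvxk
  set f := T one with hf
  set u : ℕ → ℝ → ℝ := fun k => T (exk k) with hu
  set vs : ℕ → ℝ → ℝ := fun k => T (vxk k) with hvs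
  have hiso1 : ∀ x : ℕ → ℝ, (∀ n, |x n| ≤ 1) → (⨆ n, |x n|) = 1 →
      lorentzMem phi (T x) ∧ lorentzNormE phi (T x) = 1 := by
    intro x hxb hxs
    have hbdd : BddAbove (Set.range fun n => |x n|) := ⟨1, by rintro y ⟨n, rfl⟩; exact hxb n⟩
    obtain ⟨hmem, hnm⟩ := hTiso x hbdd
    refine ⟨hmem, ?_⟩
    have hne : lorentzNormE phi (T x) ≠ ⊤ := hmem.2.ne
    rw [hxs] at hnm
    rw [← ENNReal.ofReal_toReal hne,
      show (lorentzNormE phi (T x)).toReal = lorentzNorm phi (T x) from rfl, hnm,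
      ENNReal.ofReal_one]
  have hsup_one : (⨆ n : ℕ, |one n|) = 1 := by simp [hone]
  have hbdd_e : ∀ k, BddAbove (Set.range fun n => |exk k n|) := by
    intro k
    refine ⟨1, ?_⟩
    rintro y ⟨n, rfl⟩
    simp only [hexk]
    split <;> simp
  have hsup_e : ∀ k, (⨆ n, |exk k n|) = 1 := by
    intro k
    refine le_antisymm (ciSup_le fun n => ?_) ?_
    · simp only [hexk]; split <;> simp
    · have h1 := le_ciSup (hbdd_e k) k
      simpa [hexk] using h1
  have hbdd_v : ∀ k, BddAbove (Set.range fun n => |vxk k n|) := by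
    intro k
    refine ⟨1, ?_⟩
    rintro y ⟨n, rfl⟩
    simp only [hvxk]
    split <;> simp
  have hsup_v : ∀ k, (⨆ n, |vxk k n|) = 1 := by
    intro k
    refine le_antisymm (ciSup_le fun n => ?_) ?_
    · simp only [hvxk]; split <;> simp
    · have h1 := le_ciSup (hbdd_v k) 0
      simpa [hvxk, Nat.zero_le] using h1
  have hfmem : lorentzMem phi f ∧ lorentzNormE phi f = 1 :=
    hiso1 one (fun n => by simp [hone]) hsup_one
  have humem : ∀ k, lorentzMem phi (u k) ∧ lorentzNormE phi (u k) = 1 := fun k =>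
    hiso1 _ (fun n => by simp only [hexk]; split <;> norm_num) (hsup_e k)
  have hvmem : ∀ k, lorentzMem phi (vs k) ∧ lorentzNormE phi (vs k) = 1 := fun k =>
    hiso1 _ (fun n => by simp only [hvxk]; split <;> norm_num) (hsup_v k)
  have hfpos : ∀ t, 0 ≤ f t := hTpos one (fun n => by simp [hone])
  have hupos : ∀ k t, 0 ≤ u k t := fun k =>
    hTpos _ (fun n => by simp only [hexk]; split <;> norm_num)
  have hvpos : ∀ k t, 0 ≤ vs k t := fun k =>
    hTpos _ (fun n => by simp only [hvxk]; split <;> norm_num)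
  have hvle : ∀ k t, vs k t ≤ f t := fun k t =>
    hTmono _ _ (fun n => by simp only [hvxk, hone]; split <;> norm_num) t
  have hvmono : ∀ k t, vs k t ≤ vs (k+1) t := by
    intro k t
    refine hTmono _ _ (fun n => ?_) t
    simp only [hvxk]
    split_ifs with h1 h2
    · norm_num
    · norm_num
    · exact absurd (by omega : n ≤ k + 1) h1
    · norm_num
  have hdecomp : ∀ k t, vs (k+1) t = vs k t + u (k+1) t := by
    intro k t
    have h2 : vxk (k+1) = vxk k + exk (k+1) := by
      funext n
      simp only [hvxk, hexk, Pi.add_apply]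
      rcases lt_trichotomy n (k+1) with h | h | h
      · have ha : n ≤ k + 1 := h.le
        have hb : n ≤ k := by omega
        have hc : n ≠ k + 1 := by omega
        simp [ha, hb, hc]
      · subst h
        rw [if_pos (le_refl (k+1)), if_neg (by omega : ¬(k+1 ≤ k)), if_pos rfl]
        norm_num
      · rw [if_neg (by omega), if_neg (by omega), if_neg (by omega)]
        norm_num
    show T (vxk (k+1)) t = T (vxk k) t + T (exk (k+1)) t
    rw [h2, hTadd, Pi.add_apply]
  have hbddv : ∀ t, BddAbove (Set.range fun k => vs k t) := by
    intro t
    refine ⟨f t, ?_⟩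
    rintro y ⟨k, rfl⟩
    exact hvle k t
  set v : ℝ → ℝ := fun t => ⨆ k, vs k t with hv
  have hvsmono : ∀ t, Monotone fun k => vs k t := fun t =>
    monotone_nat_of_le_succ (fun k => hvmono k t)
  have hvtend : ∀ t, Tendsto (fun k => vs k t) atTop (𝓝 (v t)) := fun t =>
    tendsto_atTop_ciSup (hvsmono t) (hbddv t)
  have hvsle : ∀ k t, vs k t ≤ v t := fun k t => le_ciSup (hbddv t) k
  have hvlef : ∀ t, v t ≤ f t := fun t => ciSup_le fun k => hvle k t
  set w : ℕ → ℝ → ℝ := fun k t => v t - vs k t with hw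
  have hwpos : ∀ k t, 0 ≤ w k t := fun k t => sub_nonneg.mpr (hvsle k t)
  have hwlef : ∀ k t, w k t ≤ f t := by
    intro k t
    show v t - vs k t ≤ f t
    linarith [hvpos k t, hvlef t]
  have hwanti : ∀ k t, w (k+1) t ≤ w k t := by
    intro k t
    show v t - vs (k+1) t ≤ v t - vs k t
    linarith [hvmono k t]
  have hwanti' : ∀ t, Antitone fun k => w k t := fun t =>
    antitone_nat_of_succ_le fun k => hwanti k t
  have hwtend : ∀ t, Tendsto (fun k => w k t) atTop (𝓝 0) := by
    intro t
    have h1 := (tendsto_const_nhds (x := v t) (f := atTop (α := ℕ))).sub (hvtend t)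
    simpa using h1
  have hwge : ∀ k t, u (k+1) t ≤ w k t := by
    intro k t
    have h1 := hdecomp k t
    have h2 := hvsle (k+1) t
    show u (k+1) t ≤ v t - vs k t
    linarith
  have habsf : ∀ t, |f t| = f t := fun t => abs_of_nonneg (hfpos t)
  have habsw : ∀ k t, |w k t| = w k t := fun k t => abs_of_nonneg (hwpos k t)
  have hwabs_le_f : ∀ k s, |w k s| ≤ |f s| := by
    intro k s
    rw [habsw k s, habsf s]
    exact hwlef k s
  have hfae : AEMeasurable f (volume.restrict (Set.Ioi (0:ℝ))) := hfmem.1.1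
  have hfabs_ae : AEMeasurable (fun s => |f s|) (volume.restrict (Set.Ioi (0:ℝ))) := by
    simpa [Real.norm_eq_abs] using hfae.norm
  have hvae : AEMeasurable v (volume.restrict (Set.Ioi (0:ℝ))) := by
    refine aemeasurable_of_tendsto_metrizable_ae' (fun k => (hvmem k).1.1) ?_
    exact Eventually.of_forall hvtend
  have hwae : ∀ k, AEMeasurable (w k) (volume.restrict (Set.Ioi (0:ℝ))) := fun k =>
    hvae.sub (hvmem k).1.1
  -- existence of a scale where distribution is small
  have hA1 : ∃ t1 : ℝ, 0 < t1 ∧ ∃ lam : ℝ, 0 < lam ∧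
      (volume.restrict (Set.Ioi (0:ℝ))) {s : ℝ | lam < |f s|} ≤ ENNReal.ofReal t1 := by
    by_contra hcon
    push_neg at hcon
    have hzero : ∀ t : ℝ, 0 < t → rear (volume.restrict (Set.Ioi (0:ℝ))) f t = 0 := by
      intro t ht
      have hempty : {lam : ℝ | 0 < lam ∧
          (volume.restrict (Set.Ioi (0:ℝ))) {s : ℝ | lam < |f s|} ≤ ENNReal.ofReal t} = ∅ := by
        rw [Set.eq_empty_iff_forall_notMem]
        rintro lam ⟨h1, h2⟩
        exact lt_irrefl _ (lt_of_le_of_lt h2 (hcon t ht lam h1))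
      show sInf {lam : ℝ | 0 < lam ∧
          (volume.restrict (Set.Ioi (0:ℝ))) {s : ℝ | lam < |f s|} ≤ ENNReal.ofReal t} = 0
      rw [hempty, Real.sInf_empty]
    have hE0 : lorentzNormE phi f = 0 := by
      simp only [lorentzNormE]
      have hcong : ∀ᵐ t ∂(volume.restrict (Set.Ioi (0:ℝ))),
          ENNReal.ofReal (rear (volume.restrict (Set.Ioi (0:ℝ))) f t * deriv phi t) = 0 := by
        filter_upwards [ae_restrict_mem measurableSet_Ioi] with t ht
        rw [hzero t (Set.mem_Ioi.mp ht), zero_mul, ENNReal.ofReal_zero]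
      rw [lintegral_congr_ae hcong, lintegral_zero]
    rw [hfmem.2] at hE0
    exact one_ne_zero hE0
  obtain ⟨t1, ht1, lam1, hlam1, hlam1le⟩ := hA1
  have hdf : ∀ lam : ℝ, 0 < lam →
      (volume.restrict (Set.Ioi (0:ℝ))) {s : ℝ | lam < |f s|} < ⊤ := by
    intro lam hlam
    by_contra hcon
    push_neg at hcon
    have htop : (volume.restrict (Set.Ioi (0:ℝ))) {s : ℝ | lam < |f s|} = ⊤ :=
      top_le_iff.mp hcon
    have hrge : ∀ t : ℝ, t1 ≤ t → lam ≤ rear (volume.restrict (Set.Ioi (0:ℝ))) f t := by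
      intro t ht
      refine le_csInf ⟨lam1, hlam1, le_trans hlam1le (ENNReal.ofReal_le_ofReal ht)⟩ ?_
      rintro b ⟨hb1, hb2⟩
      by_contra hblt
      push_neg at hblt
      have hsub : {s : ℝ | lam < |f s|} ⊆ {s : ℝ | b < |f s|} := fun s hs =>
        lt_trans hblt hs
      have h1 : (⊤:ℝ≥0∞) ≤ (volume.restrict (Set.Ioi (0:ℝ))) {s : ℝ | b < |f s|} :=
        le_trans (le_of_eq htop.symm) (measure_mono hsub)
      exact lt_irrefl _ (lt_of_le_of_lt (le_trans h1 hb2) ENNReal.ofReal_lt_top)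
    have hEtop : (⊤:ℝ≥0∞) ≤ lorentzNormE phi f := by
      simp only [lorentzNormE]
      have h1 : (∫⁻ t in Set.Ioi t1, ENNReal.ofReal (lam * deriv phi t))
          ≤ ∫⁻ t in Set.Ioi (0:ℝ),
            ENNReal.ofReal (rear (volume.restrict (Set.Ioi (0:ℝ))) f t * deriv phi t) := by
        refine le_trans (lintegral_mono_ae ?_) (lintegral_mono_set (Set.Ioi_subset_Ioi ht1.le))
        filter_upwards [ae_restrict_mem measurableSet_Ioi] with t ht
        have htpos : 0 < t := lt_trans ht1 (Set.mem_Ioi.mp ht)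
        exact ENNReal.ofReal_le_ofReal (mul_le_mul_of_nonneg_right
          (hrge t (Set.mem_Ioi.mp ht).le) (deriv_nonneg' hmono hconc htpos))
      have h2 : (∫⁻ t in Set.Ioi t1, ENNReal.ofReal (lam * deriv phi t)) = ⊤ := by
        have hcong : ∀ᵐ t ∂(volume.restrict (Set.Ioi t1)), ENNReal.ofReal (lam * deriv phi t)
            = ENNReal.ofReal lam * ENNReal.ofReal (deriv phi t) :=
          Eventually.of_forall fun t => ENNReal.ofReal_mul hlam.le
        rw [lintegral_congr_ae hcong, lintegral_const_mul' _ _ ENNReal.ofReal_ne_top,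
          lint_Ioi_top hmono hconc h0 hub ht1.le,
          ENNReal.mul_top (ENNReal.ofReal_pos.mpr hlam).ne']
      exact le_trans (le_of_eq h2.symm) h1
    rw [hfmem.2] at hEtop
    exact lt_irrefl _ (lt_of_le_of_lt hEtop ENNReal.one_lt_top)
  set Sf : ℕ → Set ℝ := fun n => {s : ℝ | ((n:ℝ)+1) < |f s|} with hSf
  have hdtend : Tendsto (fun n : ℕ => (volume.restrict (Set.Ioi (0:ℝ))) (Sf n)) atTop (𝓝 0) := by
    have hIempty : (⋂ n : ℕ, Sf n) = ∅ := by
      rw [Set.eq_empty_iff_forall_notMem]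
      intro s hs
      simp only [hSf, Set.mem_iInter, Set.mem_setOf_eq] at hs
      obtain ⟨n, hn⟩ := exists_nat_gt |f s|
      exact absurd (hs n) (by push_neg; linarith)
    have htt := tendsto_measure_iInter_atTop (μ := volume.restrict (Set.Ioi (0:ℝ)))
      (s := Sf)
      (fun n => (hfabs_ae.nullMeasurable) measurableSet_Ioi)
      (fun m n hmn s hs => by
        simp only [hSf, Set.mem_setOf_eq] at hs ⊢
        have hcast : (m:ℝ) ≤ (n:ℝ) := Nat.cast_le.mpr hmn
        linarith
        )
      ⟨0, (by
        have := hdf ((0:ℝ)+1) (by norm_num)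
        simpa [hSf] using this.ne)⟩
    rw [hIempty] at htt
    simp only [measure_empty] at htt
    exact htt
  have hexists : ∀ g : ℝ → ℝ, (∀ s, |g s| ≤ |f s|) → ∀ t : ℝ, 0 < t →
      ∃ lam : ℝ, 0 < lam ∧
        (volume.restrict (Set.Ioi (0:ℝ))) {s : ℝ | lam < |g s|} ≤ ENNReal.ofReal t := by
    intro g hg t ht
    obtain ⟨n, hn⟩ := (hdtend.eventually_lt_const (ENNReal.ofReal_pos.mpr ht)).exists
    refine ⟨(n:ℝ)+1, by positivity, ?_⟩
    refine le_trans (measure_mono fun s hs => ?_) hn.le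
    simp only [hSf, Set.mem_setOf_eq]
    exact lt_of_lt_of_le hs (hg s)
  have hne_w : ∀ k, ∀ t : ℝ, 0 < t → ∃ lam : ℝ, 0 < lam ∧
      (volume.restrict (Set.Ioi (0:ℝ))) {s : ℝ | lam < |w k s|} ≤ ENNReal.ofReal t :=
    fun k => hexists (w k) (hwabs_le_f k)
  -- lower bound
  have hlow : ∀ k, (1:ℝ≥0∞) ≤ lorentzNormE phi (w k) := by
    intro k
    rw [← (humem (k+1)).2]
    simp only [lorentzNormE]
    refine lintegral_mono_ae ?_
    filter_upwards [ae_restrict_mem measurableSet_Ioi] with t ht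
    have htpos : 0 < t := Set.mem_Ioi.mp ht
    have hrle : rear (volume.restrict (Set.Ioi (0:ℝ))) (u (k+1)) t
        ≤ rear (volume.restrict (Set.Ioi (0:ℝ))) (w k) t := by
      refine rear_le_rear _ (Eventually.of_forall fun s => ?_) (hne_w k t htpos)
      rw [habsw, abs_of_nonneg (hupos (k+1) s)]
      exact hwge k s
    exact ENNReal.ofReal_le_ofReal (mul_le_mul_of_nonneg_right hrle
      (deriv_nonneg' hmono hconc htpos))
  -- pointwise convergence of rearrangements
  have hrear_w_tend : ∀ t : ℝ, 0 < t →
      Tendsto (fun k => rear (volume.restrict (Set.Ioi (0:ℝ))) (w k) t) atTop (𝓝 0) := by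
    intro t ht
    have hanti : Antitone fun k => rear (volume.restrict (Set.Ioi (0:ℝ))) (w k) t := by
      refine antitone_nat_of_succ_le fun k => ?_
      refine rear_le_rear _ (Eventually.of_forall fun s => ?_) (hne_w k t ht)
      rw [habsw, habsw]
      exact hwanti k s
    have hbddb : BddBelow (Set.range fun k => rear (volume.restrict (Set.Ioi (0:ℝ))) (w k) t) := by
      refine ⟨0, ?_⟩
      rintro y ⟨k, rfl⟩
      exact rear_nonneg' _ _ t
    have htendinf := tendsto_atTop_ciInf hanti hbddb
    have hinfle : ∀ ε : ℝ, 0 < ε →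
        (⨅ k, rear (volume.restrict (Set.Ioi (0:ℝ))) (w k) t) ≤ ε := by
      intro ε hε
      set Sw : ℕ → Set ℝ := fun k => {s : ℝ | ε < |w k s|} with hSw
      have hμtend : Tendsto (fun k => (volume.restrict (Set.Ioi (0:ℝ))) (Sw k))
          atTop (𝓝 ((volume.restrict (Set.Ioi (0:ℝ))) (⋂ k, Sw k))) := by
        refine tendsto_measure_iInter_atTop (s := Sw)
          (fun k => (((by simpa [Real.norm_eq_abs] using (hwae k).norm) :
            AEMeasurable (fun s => |w k s|) (volume.restrict (Set.Ioi (0:ℝ)))).nullMeasurable)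
            measurableSet_Ioi)
          (fun m n hmn s hs => ?_)
          ⟨0, (lt_of_le_of_lt (measure_mono fun s hs =>
            lt_of_lt_of_le hs (hwabs_le_f 0 s)) (hdf ε hε)).ne⟩
        simp only [hSw, Set.mem_setOf_eq] at hs ⊢
        rw [habsw] at hs ⊢
        exact lt_of_lt_of_le hs (hwanti' s hmn)
      have hIw : (⋂ k, Sw k) = ∅ := by
        rw [Set.eq_empty_iff_forall_notMem]
        intro s hs
        simp only [hSw, Set.mem_iInter, Set.mem_setOf_eq] at hs
        obtain ⟨k, hk⟩ := ((hwtend s).eventually_lt_const hε).exists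
        refine absurd (hs k) ?_
        rw [habsw]
        exact not_lt.mpr hk.le
      rw [hIw] at hμtend
      simp only [measure_empty] at hμtend
      obtain ⟨k, hk⟩ := (hμtend.eventually_lt_const (ENNReal.ofReal_pos.mpr ht)).exists
      calc (⨅ j, rear (volume.restrict (Set.Ioi (0:ℝ))) (w j) t)
          ≤ rear (volume.restrict (Set.Ioi (0:ℝ))) (w k) t := ciInf_le hbddb k
        _ ≤ ε := rear_le_of_mem hε hk.le
    have hinf0 : (⨅ k, rear (volume.restrict (Set.Ioi (0:ℝ))) (w k) t) = 0 := by
      refine le_antisymm ?_ (le_ciInf fun k => rear_nonneg' _ _ t)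
      by_contra hq
      push_neg at hq
      have := hinfle _ (half_pos hq)
      linarith
    rwa [hinf0] at htendinf
  -- dominated convergence
  have hwnormtend : Tendsto (fun k => lorentzNormE phi (w k)) atTop (𝓝 0) := by
    simp only [lorentzNormE]
    have hdc := tendsto_lintegral_of_dominated_convergence'
      (μ := volume.restrict (Set.Ioi (0:ℝ)))
      (F := fun k t => ENNReal.ofReal (rear (volume.restrict (Set.Ioi (0:ℝ))) (w k) t
        * deriv phi t))
      (f := fun _ => 0)
      (fun t => ENNReal.ofReal (rear (volume.restrict (Set.Ioi (0:ℝ))) f t * deriv phi t))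
      (fun k => (ENNReal.measurable_ofReal.comp_aemeasurable
        ((antitoneOn_aemeasurable (rear_antitoneOn (hne_w k))).mul
          (measurable_deriv phi).aemeasurable)))
      (fun k => by
        filter_upwards [ae_restrict_mem measurableSet_Ioi] with t ht
        have htpos : 0 < t := Set.mem_Ioi.mp ht
        have hrle : rear (volume.restrict (Set.Ioi (0:ℝ))) (w k) t
            ≤ rear (volume.restrict (Set.Ioi (0:ℝ))) f t :=
          rear_le_rear _ (Eventually.of_forall (hwabs_le_f k))
            (hexists f (fun s => le_refl _) t htpos)
        exact ENNReal.ofReal_le_ofReal (mul_le_mul_of_nonneg_right hrle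
          (deriv_nonneg' hmono hconc htpos)))
      (by
        have : (∫⁻ t in Set.Ioi (0:ℝ),
            ENNReal.ofReal (rear (volume.restrict (Set.Ioi (0:ℝ))) f t * deriv phi t))
            = lorentzNormE phi f := rfl
        rw [this, hfmem.2]
        exact ENNReal.one_ne_top)
      (by
        filter_upwards [ae_restrict_mem measurableSet_Ioi] with t ht
        have htpos : 0 < t := Set.mem_Ioi.mp ht
        have h1 := (hrear_w_tend t htpos).mul_const (deriv phi t)
        rw [zero_mul] at h1
        simpa using ENNReal.tendsto_ofReal h1)
    simpa using hdc
  obtain ⟨k, hk⟩ := (hwnormtend.eventually_lt_const (by norm_num : (0:ℝ≥0∞) < 1)).exists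
  exact absurd (hlow k) (not_le.mpr hk)

end ForwardDir

end AuxLorentz

/-- Let `φ` be an increasing concave function on `(0,∞)` with `φ(0⁺) = 0`. The Lorentz
space `Λ_φ` contains a lattice isometric copy of `ℓ∞` if and only if
`φ(∞) = lim_{t→∞} φ(t) < ∞` (i.e. `φ` is bounded on `(0,∞)`). -/
theorem lorentz_contains_linf_iff (phi : ℝ → ℝ)
    (hmono : StrictMonoOn phi (Set.Ioi (0 : ℝ)))
    (hconc : ConcaveOn ℝ (Set.Ioi (0 : ℝ)) phi)
    (h0 : Tendsto phi (𝓝[>] (0 : ℝ)) (𝓝 0)) :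
    HasLatticeCopyLinf (lorentzMem phi) (lorentzNorm phi) ↔
      BddAbove (phi '' Set.Ioi (0 : ℝ)) := by
  constructor
  · exact forward_dir hmono hconc h0
  · exact reverse_dir hmono hconc h0
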